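/- Let Λ ⊂ ℂ be a lattice, let ℓ = 2n+1 be odd (n ≥ 0), and let p₁, …, p_ℓ ∈ ℂ be points that are pairwise distinct modulo Λ (p_i − p_j ∉ Λ for i ≠ j). Set ζ_{ij} = ζ(p_i − p_j) and ℘_i = Σ_{j≠i} ℘(p_i − p_j). Then the set of tuples (A₁, …, A_ℓ, B) ∈ ℂ^{ℓ+1} satisfying Σ_{i=1}^ℓ A_i = 0 and, for every i = 1, …, ℓ, A_i² = Σ_{j≠i} ζ_{ij} A_j + B + (3/4)℘_i, is finite and has cardinality at most 2^{ℓ−1}. -/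

import Mathlib

noncomputable section

/-- The lattice point `m ω₁ + n ω₂` attached to an integer pair. -/
def latPt (ω₁ ω₂ : ℂ) (p : ℤ × ℤ) : ℂ := p.1 * ω₁ + p.2 * ω₂

/-- Membership in the lattice `Λ = ℤω₁ + ℤω₂`. -/
def IsLatticePt (ω₁ ω₂ z : ℂ) : Prop := ∃ m n : ℤ, z = m * ω₁ + n * ω₂

/-- The Weierstrass `℘`-function of the lattice `ℤω₁ + ℤω₂`. -/
def wp (ω₁ ω₂ : ℂ) (z : ℂ) : ℂ :=
  1 / z ^ 2 + ∑' p : {p : ℤ × ℤ // p ≠ 0},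
    (1 / (z - latPt ω₁ ω₂ p.1) ^ 2 - 1 / (latPt ω₁ ω₂ p.1) ^ 2)

/-- The Weierstrass `ζ`-function of the lattice `ℤω₁ + ℤω₂`. -/
def wzeta (ω₁ ω₂ : ℂ) (z : ℂ) : ℂ :=
  1 / z + ∑' p : {p : ℤ × ℤ // p ≠ 0},
    (1 / (z - latPt ω₁ ω₂ p.1) + 1 / latPt ω₁ ω₂ p.1 + z / (latPt ω₁ ω₂ p.1) ^ 2)

/-- The derivative `℘'` of the Weierstrass `℘`-function. -/
def wpDeriv (ω₁ ω₂ : ℂ) : ℂ → ℂ := deriv (wp ω₁ ω₂)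

/-- The set of log-free parameters `(A₁,…,A_ℓ, B)` for the primitive generalized Lamé
equation with singular points `p₁,…,p_ℓ`:
`Σ A_i = 0` and `A_i² = Σ_{j≠i} ζ(p_i−p_j) A_j + B + (3/4) Σ_{j≠i} ℘(p_i−p_j)` for all `i`. -/
def logFreeSet (ω₁ ω₂ : ℂ) (ℓ : ℕ) (p : Fin ℓ → ℂ) : Set ((Fin ℓ → ℂ) × ℂ) :=
  {AB | (∑ i, AB.1 i) = 0 ∧
    ∀ i, (AB.1 i) ^ 2 =
      (∑ j ∈ Finset.univ.erase i, wzeta ω₁ ω₂ (p i - p j) * AB.1 j) + AB.2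
        + (3 / 4) * ∑ j ∈ Finset.univ.erase i, wp ω₁ ω₂ (p i - p j)}

open Finset

noncomputable section CountingCore

variable {k : ℕ}

/-- The space of affine functions on `ℂ^k`, as a span. -/
def affineFns (k : ℕ) : Submodule ℂ ((Fin k → ℂ) → ℂ) :=
  Submodule.span ℂ
    (insert (fun _ => (1 : ℂ)) (Set.range (fun (j : Fin k) => (fun y : Fin k → ℂ => y j))))

lemma one_mem_affineFns : (fun _ : Fin k → ℂ => (1 : ℂ)) ∈ affineFns k :=
  Submodule.subset_span (Set.mem_insert _ _)

lemma coord_mem_affineFns (j : Fin k) : (fun y : Fin k → ℂ => y j) ∈ affineFns k :=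
  Submodule.subset_span (Set.mem_insert_of_mem _ ⟨j, rfl⟩)

lemma const_mem_affineFns (a : ℂ) : (fun _ : Fin k → ℂ => a) ∈ affineFns k := by
  have h : (fun _ : Fin k → ℂ => a) = a • (fun _ : Fin k → ℂ => (1 : ℂ)) := by
    funext y; simp
  rw [h]
  exact Submodule.smul_mem _ _ one_mem_affineFns

variable (T : Set (Fin k → ℂ))

/-- Product of coordinates over `S`, restricted to `T`. -/
def prodFn (S : Finset (Fin k)) : ↥T → ℂ := fun y => ∏ i ∈ S, (y : Fin k → ℂ) i

/-- Span of the squarefree coordinate monomials restricted to `T`. -/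
def Wspan : Submodule ℂ (↥T → ℂ) := Submodule.span ℂ (Set.range (prodFn T))

lemma prodFn_mem (S : Finset (Fin k)) : prodFn T S ∈ Wspan T :=
  Submodule.subset_span ⟨S, rfl⟩

lemma mul_affine_prod_mem (g : (Fin k → ℂ) → ℂ) (hg : g ∈ affineFns k) (S : Finset (Fin k))
    (hS : ∀ i : Fin k, (fun y : ↥T => (y : Fin k → ℂ) i * prodFn T S y) ∈ Wspan T) :
    (fun y : ↥T => g (y : Fin k → ℂ) * prodFn T S y) ∈ Wspan T := by
  induction hg using Submodule.span_induction with
  | mem x hx =>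
      rcases hx with rfl | ⟨j, rfl⟩
      · simpa using prodFn_mem T S
      · exact hS j
  | zero =>
      have h : (fun y : ↥T => (0 : (Fin k → ℂ) → ℂ) (y : Fin k → ℂ) * prodFn T S y)
          = (0 : ↥T → ℂ) := by funext y; simp
      rw [h]; exact Submodule.zero_mem _
  | add x y hx hy ihx ihy =>
      have h : (fun z : ↥T => (x + y) (z : Fin k → ℂ) * prodFn T S z)
          = (fun z : ↥T => x (z : Fin k → ℂ) * prodFn T S z)
            + (fun z : ↥T => y (z : Fin k → ℂ) * prodFn T S z) := by
        funext z; simp [add_mul]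
      rw [h]; exact Submodule.add_mem _ ihx ihy
  | smul a x hx ih =>
      have h : (fun z : ↥T => (a • x) (z : Fin k → ℂ) * prodFn T S z)
          = a • (fun z : ↥T => x (z : Fin k → ℂ) * prodFn T S z) := by
        funext z; simp [mul_assoc]
      rw [h]; exact Submodule.smul_mem _ _ ih

/-- Main induction: multiplication by `σ` and by each coordinate preserves `Wspan`. -/
lemma key_induction (c : ℂ) (hc : ∀ m : ℕ, m ≤ k → c * m ≠ 1)
    (b : Fin k → (Fin k → ℂ) → ℂ) (hb : ∀ i, b i ∈ affineFns k)
    (hT : ∀ y ∈ T, ∀ i, y i ^ 2 = c * (∑ j, y j) * y i + b i y) :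
    ∀ S : Finset (Fin k),
      ((fun y : ↥T => (∑ j, (y : Fin k → ℂ) j) * prodFn T S y) ∈ Wspan T) ∧
      (∀ i : Fin k, (fun y : ↥T => (y : Fin k → ℂ) i * prodFn T S y) ∈ Wspan T) := by
  intro S
  induction S using Finset.strongInduction with
  | _ S IH =>
  classical
  have hcardk : (S.card : ℕ) ≤ k := by simpa using Finset.card_le_univ S
  have hne1 : (1 : ℂ) - c * S.card ≠ 0 :=
    sub_ne_zero.mpr fun h => hc S.card hcardk h.symm
  have hid : ∀ y : ↥T, (∑ j, (y : Fin k → ℂ) j) * prodFn T S y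
      = (1 - c * S.card)⁻¹ *
        ((∑ j ∈ Sᶜ, prodFn T (insert j S) y)
          + ∑ j ∈ S, b j (y : Fin k → ℂ) * prodFn T (S.erase j) y) := by
    intro y
    set z : Fin k → ℂ := (y : Fin k → ℂ) with hzdef
    have hz : z ∈ T := y.2
    have hTz := hT z hz
    rw [eq_comm, inv_mul_eq_iff_eq_mul₀ hne1, eq_comm]
    simp only [prodFn]
    set P := ∏ i ∈ S, z i with hP
    have h4 : ∀ j ∈ S, z j * P = c * (∑ m, z m) * P + b j z * ∏ i ∈ S.erase j, z i := by
      intro j hj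
      have e1 : z j * ∏ i ∈ S.erase j, z i = P := Finset.mul_prod_erase S z hj
      calc z j * P = z j ^ 2 * ∏ i ∈ S.erase j, z i := by rw [← e1]; ring
        _ = (c * (∑ m, z m) * z j + b j z) * ∏ i ∈ S.erase j, z i := by rw [hTz j]
        _ = c * (∑ m, z m) * (z j * ∏ i ∈ S.erase j, z i)
              + b j z * ∏ i ∈ S.erase j, z i := by ring
        _ = c * (∑ m, z m) * P + b j z * ∏ i ∈ S.erase j, z i := by rw [e1]
    have h5 : ∑ j ∈ S, (z j * P)
        = S.card * (c * (∑ m, z m) * P) + ∑ j ∈ S, b j z * ∏ i ∈ S.erase j, z i := by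
      rw [Finset.sum_congr rfl h4, Finset.sum_add_distrib, Finset.sum_const, nsmul_eq_mul]
    have h6 : ∑ j ∈ Sᶜ, (z j * P) = ∑ j ∈ Sᶜ, ∏ i ∈ insert j S, z i := by
      refine Finset.sum_congr rfl fun j hj => ?_
      rw [Finset.prod_insert (Finset.mem_compl.mp hj)]
    have h7 : (∑ m, z m) * P = (∑ j ∈ S, z j * P) + ∑ j ∈ Sᶜ, (z j * P) := by
      rw [Finset.sum_add_sum_compl S (fun j => z j * P), Finset.sum_mul]
    rw [h5, h6] at h7
    linear_combination h7
  have ha : (fun y : ↥T => (∑ j, (y : Fin k → ℂ) j) * prodFn T S y) ∈ Wspan T := by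
    have hfun : (fun y : ↥T => (∑ j, (y : Fin k → ℂ) j) * prodFn T S y)
        = (1 - c * S.card)⁻¹ •
          ((∑ j ∈ Sᶜ, prodFn T (insert j S))
            + ∑ j ∈ S, fun y : ↥T => b j (y : Fin k → ℂ) * prodFn T (S.erase j) y) := by
      funext y
      rw [hid y]
      simp [Finset.sum_apply]
    rw [hfun]
    refine Submodule.smul_mem _ _ (Submodule.add_mem _ ?_ ?_)
    · exact Submodule.sum_mem _ fun j _ => prodFn_mem T _
    · refine Submodule.sum_mem _ fun j hj => ?_
      exact mul_affine_prod_mem T (b j) (hb j) (S.erase j)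
        fun i => (IH (S.erase j) (Finset.erase_ssubset hj)).2 i
  refine ⟨ha, fun i => ?_⟩
  by_cases hi : i ∈ S
  · have hfun : (fun y : ↥T => (y : Fin k → ℂ) i * prodFn T S y)
        = c • (fun y : ↥T => (∑ j, (y : Fin k → ℂ) j) * prodFn T S y)
          + fun y : ↥T => b i (y : Fin k → ℂ) * prodFn T (S.erase i) y := by
      funext y
      set z : Fin k → ℂ := (y : Fin k → ℂ) with hzdef
      have hz : z ∈ T := y.2
      have e1 : z i * ∏ m ∈ S.erase i, z m = ∏ m ∈ S, z m := Finset.mul_prod_erase S z hi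
      simp only [prodFn, Pi.add_apply, Pi.smul_apply, smul_eq_mul]
      calc z i * ∏ m ∈ S, z m = z i ^ 2 * ∏ m ∈ S.erase i, z m := by rw [← e1]; ring
        _ = (c * (∑ m, z m) * z i + b i z) * ∏ m ∈ S.erase i, z m := by rw [hT z hz i]
        _ = c * ((∑ m, z m) * (z i * ∏ m ∈ S.erase i, z m))
              + b i z * ∏ m ∈ S.erase i, z m := by ring
        _ = c * ((∑ m, z m) * ∏ m ∈ S, z m) + b i z * ∏ m ∈ S.erase i, z m := by rw [e1]
    rw [hfun]
    exact Submodule.add_mem _ (Submodule.smul_mem _ _ ha)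
      (mul_affine_prod_mem T (b i) (hb i) (S.erase i)
        fun m => (IH (S.erase i) (Finset.erase_ssubset hi)).2 m)
  · have hfun : (fun y : ↥T => (y : Fin k → ℂ) i * prodFn T S y) = prodFn T (insert i S) := by
      funext y; simp [prodFn, Finset.prod_insert hi]
    rw [hfun]; exact prodFn_mem T _

lemma affine_mul_mem (c : ℂ) (hc : ∀ m : ℕ, m ≤ k → c * m ≠ 1)
    (b : Fin k → (Fin k → ℂ) → ℂ) (hb : ∀ i, b i ∈ affineFns k)
    (hT : ∀ y ∈ T, ∀ i, y i ^ 2 = c * (∑ j, y j) * y i + b i y)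
    (w : ↥T → ℂ) (hw : w ∈ Wspan T) (i : Fin k) (a : ℂ) :
    (fun y : ↥T => ((y : Fin k → ℂ) i - a) * w y) ∈ Wspan T := by
  have hcoord : (fun y : ↥T => (y : Fin k → ℂ) i * w y) ∈ Wspan T := by
    induction hw using Submodule.span_induction with
    | mem x hx =>
        obtain ⟨S, rfl⟩ := hx
        exact (key_induction T c hc b hb hT S).2 i
    | zero =>
        have h : (fun y : ↥T => (y : Fin k → ℂ) i * (0 : ↥T → ℂ) y) = (0 : ↥T → ℂ) := by
          funext y; simp
        rw [h]; exact Submodule.zero_mem _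
    | add x y hx hy ihx ihy =>
        have h : (fun z : ↥T => (z : Fin k → ℂ) i * (x + y) z)
            = (fun z : ↥T => (z : Fin k → ℂ) i * x z)
              + fun z : ↥T => (z : Fin k → ℂ) i * y z := by
          funext z; simp [mul_add]
        rw [h]; exact Submodule.add_mem _ ihx ihy
    | smul r x hx ih =>
        have h : (fun z : ↥T => (z : Fin k → ℂ) i * (r • x) z)
            = r • fun z : ↥T => (z : Fin k → ℂ) i * x z := by
          funext z; simp; ring
        rw [h]; exact Submodule.smul_mem _ _ ih
  have h : (fun y : ↥T => ((y : Fin k → ℂ) i - a) * w y)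
      = (fun y : ↥T => (y : Fin k → ℂ) i * w y) + (-a) • w := by
    funext y; simp; ring
  rw [h]
  exact Submodule.add_mem _ hcoord (Submodule.smul_mem _ _ hw)

lemma card_le_core (c : ℂ) (hc : ∀ m : ℕ, m ≤ k → c * m ≠ 1)
    (b : Fin k → (Fin k → ℂ) → ℂ) (hb : ∀ i, b i ∈ affineFns k)
    (hT : ∀ y ∈ T, ∀ i, y i ^ 2 = c * (∑ j, y j) * y i + b i y)
    (G : Finset (Fin k → ℂ)) (hG : ↑G ⊆ T) : G.card ≤ 2 ^ k := by
  classical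
  set fac : (Fin k → ℂ) → (Fin k → ℂ) → (↥T → ℂ) := fun r t =>
    if h : ∃ i, r i ≠ t i then
      (fun y : ↥T => ((y : Fin k → ℂ) h.choose - t h.choose) * (r h.choose - t h.choose)⁻¹)
    else (fun _ => 1) with hfac
  have fac_mem : ∀ r t : Fin k → ℂ, ∀ w ∈ Wspan T,
      (fun y : ↥T => fac r t y * w y) ∈ Wspan T := by
    intro r t w hw
    by_cases h : ∃ i, r i ≠ t i
    · have hre : (fun y : ↥T => fac r t y * w y)
          = (r h.choose - t h.choose)⁻¹ •
            fun y : ↥T => ((y : Fin k → ℂ) h.choose - t h.choose) * w y := by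
        funext y
        simp only [hfac, dif_pos h, Pi.smul_apply, smul_eq_mul]
        ring
      rw [hre]
      exact Submodule.smul_mem _ _ (affine_mul_mem T c hc b hb hT w hw _ _)
    · have hre : (fun y : ↥T => fac r t y * w y) = w := by
        funext y; simp only [hfac, dif_neg h]; simp
      rw [hre]; exact hw
  have prod_mem : ∀ r : Fin k → ℂ, ∀ H : Finset (Fin k → ℂ),
      (fun y : ↥T => ∏ t ∈ H, fac r t y) ∈ Wspan T := by
    intro r H
    induction H using Finset.induction with
    | empty =>
        have h : (fun _ : ↥T => (1 : ℂ)) = prodFn T ∅ := by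
          funext y; simp [prodFn]
        simpa [h] using prodFn_mem T ∅
    | insert a H' hnot ih =>
        have h : (fun y : ↥T => ∏ t ∈ insert a H', fac r t y)
            = fun y : ↥T => fac r a y * ∏ t ∈ H', fac r t y := by
          funext y; rw [Finset.prod_insert hnot]
        rw [h]
        exact fac_mem r a _ ih
  have fac_eval_one : ∀ r t : Fin k → ℂ, r ≠ t → ∀ hr : r ∈ T, fac r t ⟨r, hr⟩ = 1 := by
    intro r t hrt hr
    have h : ∃ i, r i ≠ t i := Function.ne_iff.mp hrt
    simp only [hfac, dif_pos h]
    exact mul_inv_cancel₀ (sub_ne_zero.mpr h.choose_spec)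
  have fac_eval_zero : ∀ r t : Fin k → ℂ, r ≠ t → ∀ ht : t ∈ T, fac r t ⟨t, ht⟩ = 0 := by
    intro r t hrt ht
    have h : ∃ i, r i ≠ t i := Function.ne_iff.mp hrt
    simp only [hfac, dif_pos h]
    simp
  set g : (Fin k → ℂ) → (↥T → ℂ) := fun r y => ∏ t ∈ G.erase r, fac r t y with hg
  have hgmem : ∀ r, g r ∈ Wspan T := fun r => prod_mem r _
  have hgeval : ∀ r, r ∈ G → ∀ u, u ∈ G → ∀ hu : u ∈ T,
      g r ⟨u, hu⟩ = if u = r then 1 else 0 := by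
    intro r hr u hu huT
    by_cases he : u = r
    · subst he
      rw [if_pos rfl]
      refine Finset.prod_eq_one fun t ht => ?_
      exact fac_eval_one u t (Finset.ne_of_mem_erase ht).symm huT
    · rw [if_neg he]
      refine Finset.prod_eq_zero (Finset.mem_erase.mpr ⟨he, hu⟩) ?_
      exact fac_eval_zero r u (fun hru => he hru.symm) huT
  haveI : FiniteDimensional ℂ (Wspan T) :=
    FiniteDimensional.span_of_finite ℂ (Set.finite_range (prodFn T))
  set restr : ↥G → ↥T := fun u => ⟨(u : Fin k → ℂ), hG u.2⟩ with hrestr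
  set E : (Wspan T) →ₗ[ℂ] (↥G → ℂ) :=
    (LinearMap.funLeft ℂ ℂ restr).comp (Wspan T).subtype with hE
  have hsurj : Function.Surjective E := by
    intro v
    refine ⟨⟨∑ r : ↥G, v r • g (r : Fin k → ℂ),
      Submodule.sum_mem _ fun r _ => Submodule.smul_mem _ _ (hgmem _)⟩, ?_⟩
    funext u
    simp only [hE, LinearMap.comp_apply, Submodule.coe_subtype, LinearMap.funLeft_apply]
    rw [Finset.sum_apply]
    rw [Finset.sum_eq_single u]
    · have := hgeval (u : Fin k → ℂ) u.2 (u : Fin k → ℂ) u.2 (hG u.2)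
      simp only [hrestr, Pi.smul_apply, smul_eq_mul]
      rw [this, if_pos rfl, mul_one]
    · intro r _ hru
      have hz : g (r : Fin k → ℂ) (restr u) = 0 := by
        have := hgeval (r : Fin k → ℂ) r.2 (u : Fin k → ℂ) u.2 (hG u.2)
        simp only [hrestr]
        rw [this, if_neg]
        intro hh
        exact hru (Subtype.ext hh).symm
      simp [hz]
    · intro hu; exact absurd (Finset.mem_univ u) hu
  have h1 : G.card = Module.finrank ℂ (↥G → ℂ) := by
    rw [Module.finrank_pi (R := ℂ) (ι := ↥G), Fintype.card_coe]
  have h2 : Module.finrank ℂ (↥G → ℂ) ≤ Module.finrank ℂ (Wspan T) := by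
    have hle := LinearMap.finrank_range_le E
    rwa [LinearMap.range_eq_top.mpr hsurj, finrank_top] at hle
  have h3 : Module.finrank ℂ (Wspan T) ≤ 2 ^ k := by
    have hle := finrank_range_le_card (R := ℂ) (prodFn T)
    simp only [Fintype.card_finset, Fintype.card_fin] at hle
    exact hle
  omega

lemma core_count (c : ℂ) (hc : ∀ m : ℕ, m ≤ k → c * m ≠ 1)
    (b : Fin k → (Fin k → ℂ) → ℂ) (hb : ∀ i, b i ∈ affineFns k)
    (hT : ∀ y ∈ T, ∀ i, y i ^ 2 = c * (∑ j, y j) * y i + b i y) :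
    T.Finite ∧ T.ncard ≤ 2 ^ k := by
  classical
  have hfin : T.Finite := by
    by_contra h
    obtain ⟨t, hsub, htfin, hcard⟩ :=
      Set.Infinite.exists_subset_ncard_eq (s := T) h (2 ^ k + 1)
    have hle := card_le_core T c hc b hb hT htfin.toFinset
      (by rw [Set.Finite.coe_toFinset]; exact hsub)
    rw [← Set.ncard_eq_toFinset_card t htfin, hcard] at hle
    omega
  refine ⟨hfin, ?_⟩
  have hle := card_le_core T c hc b hb hT hfin.toFinset
    (by rw [Set.Finite.coe_toFinset])
  rwa [← Set.ncard_eq_toFinset_card T hfin] at hle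

end CountingCore

/-- for `ℓ = 2n+1` odd and `p₁,…,p_ℓ` pairwise distinct mod `Λ`, the set of
log-free parameters is finite of cardinality at most `2^{ℓ−1}`. -/
theorem stmt0 (ω₁ ω₂ : ℂ)
    (hindep : ∀ a b : ℝ, (a : ℂ) * ω₁ + (b : ℂ) * ω₂ = 0 → a = 0 ∧ b = 0)
    (n : ℕ) (p : Fin (2 * n + 1) → ℂ)
    (hdist : ∀ i j, i ≠ j → ¬ IsLatticePt ω₁ ω₂ (p i - p j)) :
    (logFreeSet ω₁ ω₂ (2 * n + 1) p).Finite ∧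
      (logFreeSet ω₁ ω₂ (2 * n + 1) p).ncard ≤ 2 ^ (2 * n) := by
  classical
  set L : Fin (2 * n + 1) := Fin.last (2 * n) with hL
  set lC : ℂ := ((2 * n + 1 : ℕ) : ℂ) with hlCdef
  have hlC : lC ≠ 0 := by
    rw [hlCdef]
    have h : (2 * n + 1 : ℕ) ≠ 0 := by omega
    exact_mod_cast h
  set c : ℂ := 2 / lC with hcdef
  set σd : (Fin (2 * n) → ℂ) → ℂ := fun y => (∑ j, y j) / lC with hσd
  set Ah : (Fin (2 * n) → ℂ) → Fin (2 * n + 1) → ℂ :=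
    fun y => Fin.lastCases (-σd y) (fun i => y i - σd y) with hAhdef
  set b : Fin (2 * n) → (Fin (2 * n) → ℂ) → ℂ := fun i y =>
    ((∑ j ∈ Finset.univ.erase i.castSucc, wzeta ω₁ ω₂ (p i.castSucc - p j) * Ah y j)
        + 3 / 4 * ∑ j ∈ Finset.univ.erase i.castSucc, wp ω₁ ω₂ (p i.castSucc - p j))
      - ((∑ j ∈ Finset.univ.erase L, wzeta ω₁ ω₂ (p L - p j) * Ah y j)
        + 3 / 4 * ∑ j ∈ Finset.univ.erase L, wp ω₁ ω₂ (p L - p j)) with hbdef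
  -- the quadric system set
  set T : Set (Fin (2 * n) → ℂ) :=
    {y | ∀ i, y i ^ 2 = c * (∑ j, y j) * y i + b i y} with hTdef
  -- hypothesis hc
  have hc : ∀ m : ℕ, m ≤ 2 * n → c * m ≠ 1 := by
    intro m hm h
    rw [hcdef, div_mul_eq_mul_div, div_eq_iff hlC, one_mul, hlCdef] at h
    have h3 : (2 * m : ℕ) = 2 * n + 1 := by exact_mod_cast h
    omega
  -- affineness
  have hsummem : (fun y : Fin (2 * n) → ℂ => ∑ j, y j) ∈ affineFns (2 * n) := by
    have h : (fun y : Fin (2 * n) → ℂ => ∑ j, y j)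
        = ∑ j : Fin (2 * n), fun y : Fin (2 * n) → ℂ => y j := by
      funext y; rw [Finset.sum_apply]
    rw [h]; exact Submodule.sum_mem _ fun j _ => coord_mem_affineFns j
  have hσmem : σd ∈ affineFns (2 * n) := by
    have h : σd = lC⁻¹ • fun y : Fin (2 * n) → ℂ => ∑ j, y j := by
      funext y; simp [hσd, div_eq_mul_inv, mul_comm]
    rw [h]; exact Submodule.smul_mem _ _ hsummem
  have hAhmem : ∀ j, (fun y : Fin (2 * n) → ℂ => Ah y j) ∈ affineFns (2 * n) := by
    intro j
    induction j using Fin.lastCases with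
    | last =>
        have h : (fun y : Fin (2 * n) → ℂ => Ah y (Fin.last (2 * n))) = -σd := by
          funext y; simp [hAhdef]
        rw [h]; exact Submodule.neg_mem _ hσmem
    | cast i =>
        have h : (fun y : Fin (2 * n) → ℂ => Ah y i.castSucc)
            = (fun y : Fin (2 * n) → ℂ => y i) - σd := by
          funext y; simp [hAhdef]
        rw [h]; exact Submodule.sub_mem _ (coord_mem_affineFns i) hσmem
  have hsumfn : ∀ a : Fin (2 * n + 1),
      (fun y : Fin (2 * n) → ℂ =>
        ∑ j ∈ Finset.univ.erase a, wzeta ω₁ ω₂ (p a - p j) * Ah y j) ∈ affineFns (2 * n) := by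
    intro a
    have h : (fun y : Fin (2 * n) → ℂ =>
        ∑ j ∈ Finset.univ.erase a, wzeta ω₁ ω₂ (p a - p j) * Ah y j)
        = ∑ j ∈ Finset.univ.erase a,
            wzeta ω₁ ω₂ (p a - p j) • fun y : Fin (2 * n) → ℂ => Ah y j := by
      funext y; rw [Finset.sum_apply]; simp
    rw [h]
    exact Submodule.sum_mem _ fun j _ => Submodule.smul_mem _ _ (hAhmem j)
  have hbmem : ∀ i, b i ∈ affineFns (2 * n) := by
    intro i
    have h : b i =
        ((fun y : Fin (2 * n) → ℂ =>
            ∑ j ∈ Finset.univ.erase i.castSucc, wzeta ω₁ ω₂ (p i.castSucc - p j) * Ah y j)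
          + fun _ : Fin (2 * n) → ℂ =>
              3 / 4 * ∑ j ∈ Finset.univ.erase i.castSucc, wp ω₁ ω₂ (p i.castSucc - p j))
        - ((fun y : Fin (2 * n) → ℂ =>
            ∑ j ∈ Finset.univ.erase L, wzeta ω₁ ω₂ (p L - p j) * Ah y j)
          + fun _ : Fin (2 * n) → ℂ =>
              3 / 4 * ∑ j ∈ Finset.univ.erase L, wp ω₁ ω₂ (p L - p j)) := by
      funext y; simp [hbdef]
    rw [h]
    exact Submodule.sub_mem _
      (Submodule.add_mem _ (hsumfn _) (const_mem_affineFns _))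
      (Submodule.add_mem _ (hsumfn _) (const_mem_affineFns _))
  -- sum identity
  have keysum : ∀ A : Fin (2 * n + 1) → ℂ, (∑ i, A i) = 0 →
      (∑ i : Fin (2 * n), (A i.castSucc - A L)) = -lC * A L := by
    intro A hsum
    have h := Fin.sum_univ_castSucc (n := 2 * n) (f := A)
    rw [hsum] at h
    rw [Finset.sum_sub_distrib, Finset.sum_const, Finset.card_univ, Fintype.card_fin,
      nsmul_eq_mul, hlCdef]
    push_cast
    linear_combination -h
  -- the map
  set Φ : ((Fin (2 * n + 1) → ℂ) × ℂ) → (Fin (2 * n) → ℂ) :=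
    fun AB i => AB.1 i.castSucc - AB.1 L with hΦdef
  have hAh_eval : ∀ (A : Fin (2 * n + 1) → ℂ) (B : ℂ), (∑ i, A i) = 0 →
      ∀ j, Ah (Φ (A, B)) j = A j := by
    intro A B hsum j
    have hσval : σd (Φ (A, B)) = -A L := by
      simp only [hσd]
      rw [keysum A hsum]
      field_simp
    induction j using Fin.lastCases with
    | last => simp [hAhdef, hσval]; rfl
    | cast i =>
        simp only [hAhdef, Fin.lastCases_castSucc]
        rw [hσval, hΦdef]
        ring
  -- image is in T
  have himg : ∀ AB ∈ logFreeSet ω₁ ω₂ (2 * n + 1) p, Φ AB ∈ T := by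
    rintro ⟨A, B⟩ ⟨hsum, heq⟩
    simp only [hTdef, Set.mem_setOf_eq]
    intro i
    have hAh' := hAh_eval A B hsum
    have hby : b i (Φ (A, B)) = A i.castSucc ^ 2 - A L ^ 2 := by
      simp only [hbdef]
      simp only [hAh']
      linear_combination (heq L) - (heq i.castSucc)
    have hσΦ : (∑ j, Φ (A, B) j) = -lC * A L := keysum A hsum
    have hcσ : c * (∑ j, Φ (A, B) j) = -2 * A L := by
      rw [hσΦ, hcdef]
      field_simp
    have hyi : Φ (A, B) i = A i.castSucc - A L := rfl
    rw [hcσ, hby, hyi]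
    ring
  -- injectivity
  have hinj : Set.InjOn Φ (logFreeSet ω₁ ω₂ (2 * n + 1) p) := by
    rintro ⟨A, B⟩ ⟨hsA, heqA⟩ ⟨A', B'⟩ ⟨hsA', heqA'⟩ hEq
    have hδ : ∀ i : Fin (2 * n), A i.castSucc - A L = A' i.castSucc - A' L := by
      intro i
      have := congrFun hEq i
      simpa [hΦdef] using this
    have hLL : A L = A' L := by
      have h1 : (∑ i : Fin (2 * n), (A i.castSucc - A L))
          = ∑ i : Fin (2 * n), (A' i.castSucc - A' L) :=
        Finset.sum_congr rfl fun i _ => hδ i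
      rw [keysum A hsA, keysum A' hsA'] at h1
      have h2 : lC * (A L - A' L) = 0 := by linear_combination -h1
      rcases mul_eq_zero.mp h2 with h | h
      · exact absurd h hlC
      · linear_combination h
    have hAA : A = A' := by
      funext j
      induction j using Fin.lastCases with
      | last => exact hLL
      | cast i => linear_combination (hδ i) + hLL
    have hBB : B = B' := by
      have h1 := heqA L
      have h2 := heqA' L
      rw [hAA] at h1
      linear_combination h2 - h1
    rw [Prod.mk.injEq]
    exact ⟨hAA, hBB⟩
  -- conclude
  have hTprop : ∀ y ∈ T, ∀ i, y i ^ 2 = c * (∑ j, y j) * y i + b i y := by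
    intro y hy; exact hy
  obtain ⟨hTfin, hTcard⟩ := core_count T c hc b hbmem hTprop
  have himg' : Φ '' (logFreeSet ω₁ ω₂ (2 * n + 1) p) ⊆ T := by
    rintro _ ⟨AB, hAB, rfl⟩; exact himg AB hAB
  constructor
  · exact Set.Finite.of_finite_image (hTfin.subset himg') hinj
  · calc (logFreeSet ω₁ ω₂ (2 * n + 1) p).ncard
        = (Φ '' (logFreeSet ω₁ ω₂ (2 * n + 1) p)).ncard :=
          (Set.ncard_image_of_injOn hinj).symm
      _ ≤ T.ncard := Set.ncard_le_ncard himg' hTfin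
      _ ≤ 2 ^ (2 * n) := hTcard
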